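/- For every μ > 0, the number t* := -c*(μ)μ² - √(1 - μ²/sinh²μ) satisfies h_{c*}(t*) = 0, where h_c(t) = e^{2t}(t + cμ² - 1) + t + cμ² + 1 and c*(μ) = -(1/μ²)[log((sinh μ / μ)(1 - √(1 - μ²/sinh²μ))) + √(1 - μ²/sinh²μ)]. -/

import Mathlib

theorem stmt_6 (μ : ℝ) (hμ : 0 < μ)
    (cstar tstar : ℝ)
    (hcs : cstar = -(1 / μ ^ 2) *
      (Real.log ((Real.sinh μ / μ) * (1 - Real.sqrt (1 - μ ^ 2 / Real.sinh μ ^ 2)))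
        + Real.sqrt (1 - μ ^ 2 / Real.sinh μ ^ 2)))
    (hts : tstar = -cstar * μ ^ 2 - Real.sqrt (1 - μ ^ 2 / Real.sinh μ ^ 2)) :
    Real.exp (2 * tstar) * (tstar + cstar * μ ^ 2 - 1) + tstar + cstar * μ ^ 2 + 1 = 0 := by
  have hsh : μ < Real.sinh μ := Real.self_lt_sinh_iff.mpr hμ
  have hshpos : 0 < Real.sinh μ := lt_trans hμ hsh
  set S : ℝ := Real.sqrt (1 - μ ^ 2 / Real.sinh μ ^ 2) with hS
  have harg_nonneg : 0 ≤ 1 - μ ^ 2 / Real.sinh μ ^ 2 := by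
    have h1 : μ ^ 2 / Real.sinh μ ^ 2 ≤ 1 := by
      rw [div_le_one (by positivity)]
      exact pow_le_pow_left₀ hμ.le hsh.le 2
    linarith
  have hS2 : S ^ 2 = 1 - μ ^ 2 / Real.sinh μ ^ 2 := Real.sq_sqrt harg_nonneg
  have hSlt1 : S < 1 := by
    have : 1 - μ ^ 2 / Real.sinh μ ^ 2 < 1 := by
      have : 0 < μ ^ 2 / Real.sinh μ ^ 2 := by positivity
      linarith
    calc S < Real.sqrt 1 := Real.sqrt_lt_sqrt harg_nonneg this
      _ = 1 := Real.sqrt_one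
  have hSnn : 0 ≤ S := Real.sqrt_nonneg _
  set L : ℝ := Real.sinh μ / μ * (1 - S) with hL
  have hLpos : 0 < L := by
    apply mul_pos (div_pos hshpos hμ)
    linarith
  have hts' : tstar = Real.log L := by
    rw [hts, hcs]
    have : μ ^ 2 ≠ 0 := by positivity
    field_simp
    ring
  have hcmu : cstar * μ ^ 2 = -(Real.log L + S) := by
    rw [hcs]
    have : μ ^ 2 ≠ 0 := by positivity
    field_simp
  have hexp : Real.exp (2 * tstar) = L ^ 2 := by
    rw [hts', two_mul, Real.exp_add, Real.exp_log hLpos, sq]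
  have hkey : L ^ 2 * (1 + S) = 1 - S := by
    have h1 : L ^ 2 = Real.sinh μ ^ 2 / μ ^ 2 * (1 - S) ^ 2 := by
      rw [hL]; ring
    have h2 : (1 - S) * (1 + S) = μ ^ 2 / Real.sinh μ ^ 2 := by
      have : 1 - S ^ 2 = μ ^ 2 / Real.sinh μ ^ 2 := by rw [hS2]; ring
      nlinarith
    have hsh2 : Real.sinh μ ^ 2 ≠ 0 := by positivity
    have hmu2 : μ ^ 2 ≠ 0 := by positivity
    calc L ^ 2 * (1 + S) = Real.sinh μ ^ 2 / μ ^ 2 * (1 - S) * ((1 - S) * (1 + S)) := by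
          rw [h1]; ring
      _ = Real.sinh μ ^ 2 / μ ^ 2 * (1 - S) * (μ ^ 2 / Real.sinh μ ^ 2) := by rw [h2]
      _ = 1 - S := by field_simp
  rw [hexp, hts', hcmu]
  nlinarith [hkey]
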